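/- Let x ∈ ℝ^d, δ, γ > 0, let y₁, y₂, … be i.i.d. samples from Y_δ ∼ 𝒩(x, δγ Id), and define m_{N,δ,γ} := (Σ_{i=1}^N T_f(y_i)·e^{−f(T_f(y_i))/δ}) / (Σ_{i=1}^N e^{−f(T_f(y_i))/δ}) and m_{δ,γ} := E[T_f(Y_δ)·e^{−f(T_f(Y_δ))/δ}] / E[e^{−f(T_f(Y_δ))/δ}]. Suppose there exists M ∈ 𝓜 such that m_{δ,γ} ∈ interior(Att(M)) with dist(m_{δ,γ}, ∂Att(M)) > 0. Then, almost surely, T_f(m_{N,δ,γ}) → T_f(m_{δ,γ}) as N → ∞. -/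

import Mathlib

open MeasureTheory Filter Topology Metric Set Bornology
open scoped ENNReal NNReal Classical

noncomputable section

/-- `ℝ^d` as a Euclidean space. -/
abbrev Euc (d : ℕ) : Type := EuclideanSpace ℝ (Fin d)

/-- The family `𝓜` of connected components of local minimizers of `f`: connected sets `M`
for which there is an open `𝒱` with `M ⊊ 𝒱`, `M = argmin_{𝒱} f`, and `f > f(M)` on `𝒱 ∖ M`. -/
def MinComps {d : ℕ} (f : Euc d → ℝ) : Set (Set (Euc d)) :=
  {M | IsConnected M ∧ ∃ V : Set (Euc d), IsOpen V ∧ M ⊂ V ∧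
    M = {y | y ∈ V ∧ ∀ z ∈ V, f y ≤ f z} ∧ ∀ y ∈ V \ M, ∀ m ∈ M, f m < f y}

/-- `𝓜_* = ⋃_{M ∈ 𝓜} M`. -/
def MStar {d : ℕ} (f : Euc d → ℝ) : Set (Euc d) := ⋃ M ∈ MinComps f, M

/-- The attractor `Att(M) = {y : T_f(y) ∈ M}` of a component under the local solver `T_f`. -/
def Att {d : ℕ} (Tf : Euc d → Euc d) (M : Set (Euc d)) : Set (Euc d) := {y | Tf y ∈ M}

/-- `f(M)`, the (constant) value of `f` on a component `M`. -/
def fVal {d : ℕ} (f : Euc d → ℝ) (M : Set (Euc d)) : ℝ := sInf (f '' M)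

/-- The potential `V_x(M) = f(M) + (1/(2γ))·dist(x, closure(Att(M)))²`. -/
def Vx {d : ℕ} (f : Euc d → ℝ) (Tf : Euc d → Euc d) (x : Euc d) (γ : ℝ)
    (M : Set (Euc d)) : ℝ :=
  fVal f M + 1 / (2 * γ) * infDist x (closure (Att Tf M)) ^ 2

/-- `S_f^γ(x) = argmin_{M ∈ 𝓜} V_x(M)`. -/
def Sgamma {d : ℕ} (f : Euc d → ℝ) (Tf : Euc d → Euc d) (x : Euc d) (γ : ℝ) :
    Set (Set (Euc d)) :=
  {M | M ∈ MinComps f ∧ ∀ Q ∈ MinComps f, Vx f Tf x γ M ≤ Vx f Tf x γ Q}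

/-- The Gaussian measure `𝒩(x, s·Id)` on `ℝ^d`, given through its Lebesgue density. -/
def gaussMeasure {d : ℕ} (x : Euc d) (s : ℝ) : Measure (Euc d) :=
  volume.withDensity fun y =>
    ENNReal.ofReal ((2 * Real.pi * s) ^ (-(d : ℝ) / 2) * Real.exp (-‖y - x‖ ^ 2 / (2 * s)))

lemma gauss_integrable {d : ℕ} (x : Euc d) {s : ℝ} (hs : 0 < s) :
    Integrable (fun y : Euc d => Real.exp (-‖y - x‖ ^ 2 / (2 * s))) := by
  have hb : (0:ℝ) < ((((2*s)⁻¹ : ℝ) : ℂ)).re := by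
    simp only [Complex.ofReal_re]
    positivity
  have h0 : Integrable (fun v : Euc d => Real.exp (-‖v‖ ^ 2 / (2 * s))) := by
    have h := (GaussianFourier.integrable_cexp_neg_mul_sq_norm_add (V := Euc d)
      hb 0 (0 : Euc d)).norm
    refine h.congr (ae_of_all _ (fun v => ?_))
    simp only [Complex.norm_exp]
    congr 1
    have : (((‖v‖ : ℝ) : ℂ) ^ 2).re = ‖v‖ ^ 2 := by
      rw [← Complex.ofReal_pow, Complex.ofReal_re]
    simp [Complex.add_re, Complex.mul_re, this]
    ring
  simpa using h0.comp_sub_right x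

lemma gauss_density_integrable {d : ℕ} (x : Euc d) {s : ℝ} (hs : 0 < s) :
    Integrable (fun y : Euc d =>
      (2 * Real.pi * s) ^ (-(d : ℝ) / 2) * Real.exp (-‖y - x‖ ^ 2 / (2 * s))) :=
  (gauss_integrable x hs).const_mul _

lemma gauss_finite {d : ℕ} (x : Euc d) {s : ℝ} (hs : 0 < s) :
    IsFiniteMeasure (gaussMeasure x s) := by
  constructor
  rw [gaussMeasure, withDensity_apply _ MeasurableSet.univ, setLIntegral_univ]
  rw [lt_top_iff_ne_top, lintegral_ofReal_ne_top_iff_integrable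
    (gauss_density_integrable x hs).aestronglyMeasurable
    (ae_of_all _ (fun y => by positivity))]
  exact gauss_density_integrable x hs

lemma gauss_univ_pos {d : ℕ} (x : Euc d) {s : ℝ} (hs : 0 < s) :
    0 < gaussMeasure x s Set.univ := by
  rw [gaussMeasure, withDensity_apply _ MeasurableSet.univ, setLIntegral_univ]
  have hm : Measurable (fun y : Euc d =>
      ENNReal.ofReal ((2 * Real.pi * s) ^ (-(d : ℝ) / 2) * Real.exp (-‖y - x‖ ^ 2 / (2 * s)))) := by
    apply ENNReal.measurable_ofReal.comp
    fun_prop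
  rw [lintegral_pos_iff_support hm]
  have hsupp : Function.support (fun y : Euc d =>
      ENNReal.ofReal ((2 * Real.pi * s) ^ (-(d : ℝ) / 2) * Real.exp (-‖y - x‖ ^ 2 / (2 * s)))) = Set.univ := by
    refine Set.eq_univ_of_forall (fun y => ?_)
    have h2 : (0:ℝ) < 2 * Real.pi * s := by positivity
    have : (0:ℝ) < (2 * Real.pi * s) ^ (-(d : ℝ) / 2) * Real.exp (-‖y - x‖ ^ 2 / (2 * s)) := by
      have := Real.rpow_pos_of_pos h2 (-(d : ℝ) / 2)
      positivity
    exact (ENNReal.ofReal_pos.mpr this).ne'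
  rw [hsupp]
  exact isOpen_univ.measure_pos _ Set.univ_nonempty

lemma exists_gauss_bound (C₁ C₂ α δ : ℝ) (hC₁ : 0 < C₁) (hα : 0 < α) (hδ : 0 < δ) :
    ∃ K : ℝ, ∀ t : ℝ, 0 ≤ t → t * Real.exp ((C₂ - C₁ * t ^ α) / δ) ≤ K := by
  have hc : 0 < C₁ / δ := div_pos hC₁ hδ
  have h1 : Tendsto (fun u : ℝ => u ^ α⁻¹ * Real.exp (-(C₁ / δ) * u)) atTop (𝓝 0) :=
    tendsto_rpow_mul_exp_neg_mul_atTop_nhds_zero _ _ hc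
  have h2 : Tendsto (fun t : ℝ => t ^ α) atTop atTop := tendsto_rpow_atTop hα
  have h3 : Tendsto (fun t : ℝ => t * Real.exp (-(C₁ / δ) * t ^ α)) atTop (𝓝 0) := by
    refine (h1.comp h2).congr' ?_
    filter_upwards [eventually_ge_atTop (0:ℝ)] with t ht
    simp only [Function.comp_apply]
    rw [Real.rpow_rpow_inv ht hα.ne']
  obtain ⟨T, hT⟩ := eventually_atTop.mp (h3.eventually_le_const (by norm_num : (0:ℝ) < 1))
  refine ⟨Real.exp (C₂ / δ) * max 1 (max T 0), fun t ht => ?_⟩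
  have hrw : (C₂ - C₁ * t ^ α) / δ = C₂ / δ + -(C₁ / δ) * t ^ α := by
    field_simp
    ring
  rw [hrw, Real.exp_add, mul_left_comm]
  refine mul_le_mul_of_nonneg_left ?_ (Real.exp_nonneg _)
  rcases le_total (max T 0) t with h | h
  · exact le_trans (hT t (le_trans (le_max_left _ _) h)) (le_max_left _ _)
  · calc t * Real.exp (-(C₁ / δ) * t ^ α) ≤ t * 1 := by
          refine mul_le_mul_of_nonneg_left ?_ ht
          rw [Real.exp_le_one_iff]
          have : 0 ≤ t ^ α := Real.rpow_nonneg ht α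
          nlinarith
      _ = t := mul_one t
      _ ≤ max 1 (max T 0) := le_trans h (le_max_right _ _)

/-- The exact-expectation weighted barycenter
`m_{δ,γ} = E[T_f(Y_δ) e^{-f(T_f(Y_δ))/δ}] / E[e^{-f(T_f(Y_δ))/δ}]` for `Y_δ ∼ 𝒩(x, δγ Id)`. -/
def bary {d : ℕ} (f : Euc d → ℝ) (Tf : Euc d → Euc d) (x : Euc d) (δ γ : ℝ) : Euc d :=
  (∫ y, Real.exp (-f (Tf y) / δ) ∂gaussMeasure x (δ * γ))⁻¹ •
    ∫ y, Real.exp (-f (Tf y) / δ) • Tf y ∂gaussMeasure x (δ * γ)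

/-- The empirical weighted barycenter
`m_{N,δ,γ} = (Σ_{i<N} T_f(y_i) e^{-f(T_f(y_i))/δ}) / (Σ_{i<N} e^{-f(T_f(y_i))/δ})`. -/
def baryN {d : ℕ} {Ω : Type*} (f : Euc d → ℝ) (Tf : Euc d → Euc d) (δ : ℝ)
    (y : ℕ → Ω → Euc d) (N : ℕ) (ω : Ω) : Euc d :=
  (∑ i ∈ Finset.range N, Real.exp (-f (Tf (y i ω)) / δ))⁻¹ •
    ∑ i ∈ Finset.range N, Real.exp (-f (Tf (y i ω)) / δ) • Tf (y i ω)

/-- Lemma C.2: if `m_{δ,γ}` lies well inside the attraction basin of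
some component, then `T_f(m_{N,δ,γ}) → T_f(m_{δ,γ})` almost surely. -/
theorem pbh_stmt_12 {d : ℕ} (hd : 1 ≤ d) (f : Euc d → ℝ)
    (hf_cont : Continuous f) (hf_coercive : Tendsto f (cocompact (Euc d)) atTop)
    (h_borel : ∀ M ∈ MinComps f, MeasurableSet M)
    (h_bdd : ∀ M ∈ MinComps f, IsBounded M)
    (h_locfin : ∀ K : Set (Euc d), IsCompact K → {M | M ∈ MinComps f ∧ (M ∩ K).Nonempty}.Finite)
    (Tf : Euc d → Euc d) (hTf_meas : Measurable Tf)
    (hTf_ae : ∀ᵐ y : Euc d, Tf y ∈ MStar f)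
    (hTf_dec : ∀ y, f (Tf y) ≤ f y)
    (hTf_cont : ∀ M ∈ MinComps f, ContinuousOn Tf (interior (Att Tf M)))
    (C₁ C₂ C₃ α β : ℝ) (hC₁ : 0 < C₁) (hC₂ : 0 < C₂) (hC₃ : 0 < C₃)
    (hα : 0 < α) (hαβ : α < β)
    (h_growth : ∀ z : Euc d, C₁ * ‖z‖ ^ α - C₂ ≤ f z ∧ f z ≤ C₃ * (1 + ‖z‖) ^ β)
    (x : Euc d) (δ γ : ℝ) (hδ : 0 < δ) (hγ : 0 < γ)
    (h_inside : ∃ M ∈ MinComps f, bary f Tf x δ γ ∈ interior (Att Tf M) ∧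
      0 < infDist (bary f Tf x δ γ) (frontier (Att Tf M)))
    {Ω : Type} [MeasurableSpace Ω] (P : Measure Ω) [IsProbabilityMeasure P]
    (y : ℕ → Ω → Euc d) (h_meas : ∀ i, Measurable (y i))
    (h_law : ∀ i, Measure.map (y i) P = gaussMeasure x (δ * γ))
    (h_indep : ProbabilityTheory.iIndepFun y P) :
    ∀ᵐ ω ∂P, Tendsto (fun N => Tf (baryN f Tf δ y N ω)) atTop
      (𝓝 (Tf (bary f Tf x δ γ))) := by

  classical
  obtain ⟨M, hM, hbaryM, -⟩ := h_inside
  have hs : 0 < δ * γ := mul_pos hδ hγ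
  set μ := gaussMeasure x (δ * γ) with hμ_def
  haveI : IsFiniteMeasure μ := gauss_finite x hs
  set g₁ : Euc d → ℝ := fun z => Real.exp (-f (Tf z) / δ) with hg₁def
  set g₂ : Euc d → Euc d := fun z => Real.exp (-f (Tf z) / δ) • Tf z with hg₂def
  have hg₁m : Measurable g₁ :=
    Real.measurable_exp.comp ((hf_cont.measurable.comp hTf_meas).neg.div_const δ)
  have hg₂m : Measurable g₂ := hg₁m.smul hTf_meas
  -- bounds
  have hflb : ∀ z : Euc d, C₁ * ‖Tf z‖ ^ α - C₂ ≤ f (Tf z) := fun z => (h_growth (Tf z)).1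
  have hg₁bdd : ∀ z : Euc d, ‖g₁ z‖ ≤ Real.exp (C₂ / δ) := by
    intro z
    rw [hg₁def, Real.norm_eq_abs, Real.abs_exp, Real.exp_le_exp]
    have h1 : 0 ≤ C₁ * ‖Tf z‖ ^ α :=
      mul_nonneg hC₁.le (Real.rpow_nonneg (norm_nonneg _) α)
    have h2 : -C₂ ≤ f (Tf z) := by linarith [hflb z]
    rw [div_le_div_iff_of_pos_right hδ] at *
    · linarith
  obtain ⟨K, hK⟩ := exists_gauss_bound C₁ C₂ α δ hC₁ hα hδ
  have hg₂bdd : ∀ z : Euc d, ‖g₂ z‖ ≤ K := by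
    intro z
    rw [hg₂def]
    simp only [norm_smul, Real.norm_eq_abs, Real.abs_exp]
    have hle : Real.exp (-f (Tf z) / δ) ≤ Real.exp ((C₂ - C₁ * ‖Tf z‖ ^ α) / δ) := by
      rw [Real.exp_le_exp, div_le_div_iff_of_pos_right hδ]
      linarith [hflb z]
    calc Real.exp (-f (Tf z) / δ) * ‖Tf z‖
        ≤ Real.exp ((C₂ - C₁ * ‖Tf z‖ ^ α) / δ) * ‖Tf z‖ :=
          mul_le_mul_of_nonneg_right hle (norm_nonneg _)
      _ = ‖Tf z‖ * Real.exp ((C₂ - C₁ * ‖Tf z‖ ^ α) / δ) := mul_comm _ _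
      _ ≤ K := hK _ (norm_nonneg _)
  have hg₁int : Integrable g₁ μ :=
    Integrable.mono' (integrable_const (Real.exp (C₂ / δ)))
      hg₁m.aestronglyMeasurable (ae_of_all _ hg₁bdd)
  have hg₂int : Integrable g₂ μ :=
    Integrable.mono' (integrable_const K) hg₂m.aestronglyMeasurable (ae_of_all _ hg₂bdd)
  -- positivity of the normalization constant
  have hI₁pos : 0 < ∫ z, g₁ z ∂μ := by
    rw [integral_pos_iff_support_of_nonneg (fun z => (Real.exp_pos _).le) hg₁int]
    have hsupp : Function.support g₁ = Set.univ :=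
      Set.eq_univ_of_forall (fun z => (Real.exp_pos _).ne')
    rw [hsupp]
    exact gauss_univ_pos x hs
  -- strong law of large numbers
  have hint₁ : Integrable (fun ω => g₁ (y 0 ω)) P := by
    have h : Integrable g₁ (Measure.map (y 0) P) := by rw [h_law 0]; exact hg₁int
    exact (integrable_map_measure hg₁m.aestronglyMeasurable (h_meas 0).aemeasurable).mp h
  have hint₂ : Integrable (fun ω => g₂ (y 0 ω)) P := by
    have h : Integrable g₂ (Measure.map (y 0) P) := by rw [h_law 0]; exact hg₂int
    exact (integrable_map_measure hg₂m.aestronglyMeasurable (h_meas 0).aemeasurable).mp h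
  have hpair₁ : Pairwise (Function.onFun (ProbabilityTheory.IndepFun · · P) (fun i ω => g₁ (y i ω))) :=
    fun i j hij => (h_indep.indepFun hij).comp hg₁m hg₁m
  have hpair₂ : Pairwise (Function.onFun (ProbabilityTheory.IndepFun · · P) (fun i ω => g₂ (y i ω))) :=
    fun i j hij => (h_indep.indepFun hij).comp hg₂m hg₂m
  have hid₁ : ∀ i, ProbabilityTheory.IdentDistrib (fun ω => g₁ (y i ω)) (fun ω => g₁ (y 0 ω)) P P :=
    fun i => ⟨(hg₁m.comp (h_meas i)).aemeasurable, (hg₁m.comp (h_meas 0)).aemeasurable, by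
      show Measure.map (g₁ ∘ y i) P = Measure.map (g₁ ∘ y 0) P
      rw [← Measure.map_map hg₁m (h_meas i), ← Measure.map_map hg₁m (h_meas 0), h_law i, h_law 0]⟩
  have hid₂ : ∀ i, ProbabilityTheory.IdentDistrib (fun ω => g₂ (y i ω)) (fun ω => g₂ (y 0 ω)) P P :=
    fun i => ⟨(hg₂m.comp (h_meas i)).aemeasurable, (hg₂m.comp (h_meas 0)).aemeasurable, by
      show Measure.map (g₂ ∘ y i) P = Measure.map (g₂ ∘ y 0) P
      rw [← Measure.map_map hg₂m (h_meas i), ← Measure.map_map hg₂m (h_meas 0), h_law i, h_law 0]⟩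
  have hexp₁ : ∫ ω, g₁ (y 0 ω) ∂P = ∫ z, g₁ z ∂μ := by
    rw [← h_law 0, integral_map (h_meas 0).aemeasurable hg₁m.aestronglyMeasurable]
  have hexp₂ : ∫ ω, g₂ (y 0 ω) ∂P = ∫ z, g₂ z ∂μ := by
    rw [← h_law 0, integral_map (h_meas 0).aemeasurable hg₂m.aestronglyMeasurable]
  have hA := ProbabilityTheory.strong_law_ae (fun i ω => g₁ (y i ω)) hint₁ hpair₁ hid₁
  have hB := ProbabilityTheory.strong_law_ae (fun i ω => g₂ (y i ω)) hint₂ hpair₂ hid₂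
  rw [hexp₁] at hA
  rw [hexp₂] at hB
  filter_upwards [hA, hB] with ω hAω hBω
  have hconv : Tendsto (fun N => baryN f Tf δ y N ω) atTop (𝓝 (bary f Tf x δ γ)) := by
    have h := (hAω.inv₀ hI₁pos.ne').smul hBω
    have heq : bary f Tf x δ γ = (∫ z, g₁ z ∂μ)⁻¹ • ∫ z, g₂ z ∂μ := rfl
    rw [heq]
    refine Tendsto.congr' ?_ h
    filter_upwards [eventually_ge_atTop 1] with N hN
    have hN0 : (N : ℝ) ≠ 0 := Nat.cast_ne_zero.mpr (by omega)
    show ((N : ℝ)⁻¹ • ∑ i ∈ Finset.range N, g₁ (y i ω))⁻¹ •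
        ((N : ℝ)⁻¹ • ∑ i ∈ Finset.range N, g₂ (y i ω)) = baryN f Tf δ y N ω
    rw [baryN]
    rw [smul_eq_mul, mul_inv, inv_inv, smul_smul, mul_comm (N : ℝ), mul_assoc,
      mul_inv_cancel₀ hN0, mul_one]
  have hct : ContinuousAt Tf (bary f Tf x δ γ) :=
    (hTf_cont M hM).continuousAt (isOpen_interior.mem_nhds hbaryM)
  exact hct.tendsto.comp hconv
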